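/- If F is a p-periodic map of the form F(x,y) = (αx + f(y), y/α) with α a primitive p-th root of unity and f(0)=f'(0)=0, then the Montgomery–Bochner linearization ψ(x) = (1/p) ∑_{j=0}^{p-1} (DF(0,0))^{-j}(F^j(x)) has the form ψ(x,y) = (x + g(y), y) for some function g, and hence is a global diffeomorphism linearizing F on all of 𝕂². -/

import Mathlib

/-- For a `p`-periodic triangular map `F(x,y) = (αx + f(y), y/α)` with `α` a
primitive `p`-th root of unity and `f(0) = f'(0) = 0`, the Montgomery–Bochner
linearization `ψ(x) = (1/p) ∑_{j<p} (DF(0,0))⁻ʲ(Fʲ(x))` (here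
`DF(0,0) = diag(α, 1/α)`) has the form `ψ(x,y) = (x + g(y), y)`, and is a
global diffeomorphism linearizing `F` on all of `𝕂²`. -/
theorem stmt_9 {𝕂 : Type} [RCLike 𝕂] (α : 𝕂) (p : ℕ) (hp : 0 < p)
    (hα : α ^ p = 1) (hprim : ∀ q : ℕ, 0 < q → q < p → α ^ q ≠ 1)
    (f : 𝕂 → 𝕂) (hf0 : f 0 = 0) (hf1 : deriv f 0 = 0)
    (hper : ∀ z : 𝕂 × 𝕂,
      (fun w : 𝕂 × 𝕂 => (α * w.1 + f w.2, w.2 / α))^[p] z = z)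
    (ψ : 𝕂 × 𝕂 → 𝕂 × 𝕂)
    (hψ : ∀ z : 𝕂 × 𝕂, ψ z = (p : 𝕂)⁻¹ •
      ∑ j ∈ Finset.range p,
        ((α⁻¹ ^ j * ((fun w : 𝕂 × 𝕂 => (α * w.1 + f w.2, w.2 / α))^[j] z).1,
          α ^ j * ((fun w : 𝕂 × 𝕂 => (α * w.1 + f w.2, w.2 / α))^[j] z).2))) :
    (∃ g : 𝕂 → 𝕂, ∀ x y : 𝕂, ψ (x, y) = (x + g y, y)) ∧
    Function.Bijective ψ ∧
    ∀ z : 𝕂 × 𝕂, ψ (α * z.1 + f z.2, z.2 / α) = (α * (ψ z).1, (ψ z).2 / α) := by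
  set F : 𝕂 × 𝕂 → 𝕂 × 𝕂 := fun w => (α * w.1 + f w.2, w.2 / α) with hF
  have hα0 : α ≠ 0 := by
    intro h
    have : (0 : 𝕂) = 1 := by rw [← hα, h, zero_pow hp.ne']
    exact zero_ne_one this
  have hp𝕂 : (p : 𝕂) ≠ 0 := Nat.cast_ne_zero.mpr hp.ne'
  -- iterate formula
  have hiter : ∀ j : ℕ, ∀ x y : 𝕂,
      F^[j] (x, y) = (α ^ j * x + (F^[j] (0, y)).1, y / α ^ j) := by
    intro j
    induction j with
    | zero => intro x y; simp
    | succ j ih =>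
      intro x y
      rw [Function.iterate_succ_apply', Function.iterate_succ_apply', ih x y, ih 0 y]
      simp only [hF, mul_zero, zero_add]
      refine Prod.ext ?_ ?_
      · simp only [pow_succ]; ring
      · simp only [pow_succ, div_div]
  -- first components sum
  have hfst : ∀ z : 𝕂 × 𝕂,
      (ψ z).1 = (p : 𝕂)⁻¹ * ∑ j ∈ Finset.range p, α⁻¹ ^ j * (F^[j] z).1 := by
    intro z
    rw [hψ z]
    simp [Prod.fst_sum, smul_eq_mul]
  have hsnd : ∀ z : 𝕂 × 𝕂,
      (ψ z).2 = (p : 𝕂)⁻¹ * ∑ j ∈ Finset.range p, α ^ j * (F^[j] z).2 := by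
    intro z
    rw [hψ z]
    simp [Prod.snd_sum, smul_eq_mul]
  -- second component of ψ is identity
  have hψ2 : ∀ x y : 𝕂, (ψ (x, y)).2 = y := by
    intro x y
    rw [hsnd (x, y)]
    have : ∀ j ∈ Finset.range p, α ^ j * (F^[j] (x, y)).2 = y := by
      intro j _
      rw [hiter j x y]
      field_simp
    rw [Finset.sum_congr rfl this, Finset.sum_const, Finset.card_range, nsmul_eq_mul,
      ← mul_assoc, inv_mul_cancel₀ hp𝕂, one_mul]
  -- closed form
  have hform : ∀ x y : 𝕂, ψ (x, y) = (x + (ψ (0, y)).1, y) := by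
    intro x y
    refine Prod.ext ?_ (hψ2 x y)
    rw [hfst (x, y), hfst (0, y)]
    have h1 : ∀ j ∈ Finset.range p,
        α⁻¹ ^ j * (F^[j] (x, y)).1 = x + α⁻¹ ^ j * (F^[j] (0, y)).1 := by
      intro j _
      rw [hiter j x y]
      have : α⁻¹ ^ j * α ^ j = 1 := by
        rw [← mul_pow, inv_mul_cancel₀ hα0, one_pow]
      calc α⁻¹ ^ j * (α ^ j * x + (F^[j] (0, y)).1)
          = (α⁻¹ ^ j * α ^ j) * x + α⁻¹ ^ j * (F^[j] (0, y)).1 := by ring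
        _ = x + α⁻¹ ^ j * (F^[j] (0, y)).1 := by rw [this, one_mul]
    rw [Finset.sum_congr rfl h1, Finset.sum_add_distrib, Finset.sum_const,
      Finset.card_range, nsmul_eq_mul, mul_add, ← mul_assoc, inv_mul_cancel₀ hp𝕂,
      one_mul]
  -- linearization
  have hlin : ∀ z : 𝕂 × 𝕂, ψ (F z) = (α * (ψ z).1, (ψ z).2 / α) := by
    intro z
    have hαp : α⁻¹ ^ p = 1 := by rw [inv_pow, hα, inv_one]
    refine Prod.ext ?_ ?_
    · rw [hfst (F z), hfst z]
      set u : ℕ → 𝕂 := fun j => α⁻¹ ^ j * (F^[j] z).1 with hu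
      have hup : u p = u 0 := by simp [hu, inv_pow, hα, hper z]
      have h1 : ∀ j ∈ Finset.range p, α⁻¹ ^ j * (F^[j] (F z)).1 = α * u (j + 1) := by
        intro j _
        rw [← Function.iterate_succ_apply]
        simp only [hu, pow_succ]
        field_simp
      rw [Finset.sum_congr rfl h1, ← Finset.mul_sum]
      have h2 : ∑ j ∈ Finset.range p, u (j + 1) = ∑ j ∈ Finset.range p, u j := by
        have := (Finset.sum_range_succ' u p).symm.trans (Finset.sum_range_succ u p)
        -- ∑_{j<p} u (j+1) + u 0 = ∑_{j<p} u j + u p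
        rw [hup] at this
        exact add_right_cancel this
      rw [h2]; ring
    · rw [hsnd (F z), hsnd z]
      set v : ℕ → 𝕂 := fun j => α ^ j * (F^[j] z).2 with hv
      have hvp : v p = v 0 := by simp [hv, hα, hper z]
      have h1 : ∀ j ∈ Finset.range p, α ^ j * (F^[j] (F z)).2 = α⁻¹ * v (j + 1) := by
        intro j _
        rw [← Function.iterate_succ_apply]
        simp only [hv, pow_succ]
        field_simp
      rw [Finset.sum_congr rfl h1, ← Finset.mul_sum]
      have h2 : ∑ j ∈ Finset.range p, v (j + 1) = ∑ j ∈ Finset.range p, v j := by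
        have := (Finset.sum_range_succ' v p).symm.trans (Finset.sum_range_succ v p)
        rw [hvp] at this
        exact add_right_cancel this
      rw [h2, div_eq_mul_inv]; ring
  refine ⟨⟨fun y => (ψ (0, y)).1, hform⟩, ?_, fun z => hlin z⟩
  rw [Function.bijective_iff_has_inverse]
  refine ⟨fun w => (w.1 - (ψ (0, w.2)).1, w.2), ?_, ?_⟩
  · intro z
    rw [show z = (z.1, z.2) from rfl, hform z.1 z.2]
    simp
  · intro w
    rw [hform (w.1 - (ψ (0, w.2)).1) w.2]
    simp
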